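/- Let m < 0 and let f be a non-constant solution of f''' + ((m+1)/2) f f'' - m (f')² = 0 on an interval I. If t₀ ∈ I and f''(t₀) ≤ 0, then f''(t) < 0 for all t ∈ I with t > t₀. -/

import Mathlib

open Real Set Filter Topology

private lemma gron_nonpos {g g' : ℝ → ℝ} {K a b : ℝ}
    (hg : ContinuousOn g (Icc a b))
    (hg' : ∀ t ∈ Ico a b, HasDerivWithinAt g (g' t) (Icc a b) t)
    (ha : g a ≤ 0) (bound : ∀ t ∈ Ico a b, g' t ≤ K * g t) :
    ∀ t ∈ Icc a b, g t ≤ 0 := by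
  intro t ht
  have h := le_gronwallBound_of_liminf_deriv_right_le (δ := 0) (ε := 0) (f := g) (f' := g') hg
    (fun x hx r hr => by
      have := ((hg' x hx).mono_of_mem_nhdsWithin (Icc_mem_nhdsGE_of_mem hx)).liminf_right_slope_le hr
      exact this.mono fun z hz => by rwa [slope_def_field, div_eq_inv_mul] at hz) ha
    (fun x hx => by simpa using bound x hx) t ht
  simpa [gronwallBound_ε0_δ0] using h

private lemma gron_nonpos_rev {g g' : ℝ → ℝ} {K a b : ℝ}
    (hg : ContinuousOn g (Icc a b))
    (hg' : ∀ t ∈ Ioc a b, HasDerivWithinAt g (g' t) (Icc a b) t)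
    (hb : g b ≤ 0) (bound : ∀ t ∈ Ioc a b, -(g' t) ≤ K * g t) :
    ∀ t ∈ Icc a b, g t ≤ 0 := by
  have hmaps : MapsTo (fun τ : ℝ => a + b - τ) (Icc a b) (Icc a b) := fun τ hτ => by
    simp only [mem_Icc] at *; constructor <;> linarith
  have hmem : ∀ τ ∈ Ico a b, a + b - τ ∈ Ioc a b := fun τ hτ =>
    ⟨by linarith [hτ.2], by linarith [hτ.1]⟩
  have hσ : ∀ τ ∈ Icc a b, HasDerivWithinAt (fun τ : ℝ => a + b - τ) (-1) (Icc a b) τ :=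
    fun τ _ => by simpa using (hasDerivWithinAt_id τ (Icc a b)).const_sub (a + b)
  have key : ∀ τ ∈ Icc a b, g (a + b - τ) ≤ 0 := by
    apply gron_nonpos (g := fun τ => g (a + b - τ)) (g' := fun τ => -(g' (a + b - τ))) (K := K)
    · exact hg.comp (by fun_prop) hmaps
    · intro τ hτ
      have := (hg' _ (hmem τ hτ)).comp (x := τ) (hσ τ (Ico_subset_Icc_self hτ)) hmaps
      simpa [Function.comp_def, mul_comm] using this
    · simpa using hb
    · intro τ hτ
      simpa using bound _ (hmem τ hτ)
  intro t ht
  have hmem' : a + b - t ∈ Icc a b := by simp only [mem_Icc] at *; constructor <;> linarith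
  have := key (a + b - t) hmem'
  simpa using this


private lemma key_bound {m M M' A B C D : ℝ} (hD : D + (m+1)/2*A*C - m*B^2 = 0)
    (hA : |A| ≤ M) (hB : |B| ≤ M') :
    |2*(B*C) + 2*(C*D)| ≤ (1 + |m| *M' + |m+1| *M) * (B*B + C*C) := by
  have h4 : |B*C| ≤ (B*B+C*C)/2 :=
    abs_le.mpr ⟨by nlinarith [sq_nonneg (B+C)], by nlinarith [sq_nonneg (B-C)]⟩
  have h3 : |m*B| ≤ |m| *M' := by
    rw [abs_mul]; exact mul_le_mul_of_nonneg_left hB (abs_nonneg m)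
  have h5 : |(m*B)*(B*C)| ≤ (|m| *M')*((B*B+C*C)/2) := by
    rw [abs_mul]; exact mul_le_mul h3 h4 (abs_nonneg _) ((abs_nonneg (m*B)).trans h3)
  have h6 : |(m+1)*A| ≤ |m+1| *M := by
    rw [abs_mul]; exact mul_le_mul_of_nonneg_left hA (abs_nonneg _)
  have h7 : |((m+1)*A)*(C*C)| ≤ (|m+1| *M)*(C*C) := by
    rw [abs_mul, abs_of_nonneg (mul_self_nonneg C)]
    exact mul_le_mul_of_nonneg_right h6 (mul_self_nonneg C)
  have e : 2*(B*C) + 2*(C*D) = 2*(B*C) + 2*((m*B)*(B*C)) - ((m+1)*A)*(C*C) := by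
    have hD' : D = m*B^2 - (m+1)/2*A*C := by linarith
    rw [hD']; ring
  have hM0 : 0 ≤ M := (abs_nonneg A).trans hA
  have hpos : (0:ℝ) ≤ (|m+1| *M)*(B*B) :=
    mul_nonneg (mul_nonneg (abs_nonneg _) hM0) (mul_self_nonneg B)
  have h4' := abs_le.mp h4
  have h5' := abs_le.mp h5
  have h7' := abs_le.mp h7
  exact abs_le.mpr ⟨by linarith [h4'.1, h5'.1, h7'.1, h7'.2, hpos],
    by linarith [h4'.2, h5'.2, h7'.1, h7'.2, hpos]⟩

private lemma zero_propagate (m : ℝ) (I : Set ℝ) (hI : I.OrdConnected)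
    (f f' f'' f''' : ℝ → ℝ)
    (hf : ∀ t ∈ I, HasDerivWithinAt f (f' t) I t)
    (hf' : ∀ t ∈ I, HasDerivWithinAt f' (f'' t) I t)
    (hf'' : ∀ t ∈ I, HasDerivWithinAt f'' (f''' t) I t)
    (hode : ∀ t ∈ I, f''' t + (m + 1) / 2 * f t * f'' t - m * (f' t) ^ 2 = 0)
    (a : ℝ) (haI : a ∈ I) (h1 : f' a = 0) (h2 : f'' a = 0) :
    ∀ b ∈ I, f' b = 0 := by
  intro b hbI
  set c := min a b with hc
  set d := max a b with hd
  have hcI : c ∈ I := by rcases min_choice a b with h | h <;> rw [hc, h] <;> assumption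
  have hdI : d ∈ I := by rcases max_choice a b with h | h <;> rw [hd, h] <;> assumption
  have hsub : Icc c d ⊆ I := hI.out hcI hdI
  have hfc : ContinuousOn f (Icc c d) :=
    fun t ht => ((hf t (hsub ht)).continuousWithinAt).mono hsub
  have hf'c : ContinuousOn f' (Icc c d) :=
    fun t ht => ((hf' t (hsub ht)).continuousWithinAt).mono hsub
  have hf''c : ContinuousOn f'' (Icc c d) :=
    fun t ht => ((hf'' t (hsub ht)).continuousWithinAt).mono hsub
  obtain ⟨M, hM⟩ := isCompact_Icc.exists_bound_of_continuousOn hfc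
  obtain ⟨M', hM'⟩ := isCompact_Icc.exists_bound_of_continuousOn hf'c
  set K := 1 + |m| *M' + |m+1| *M with hK
  set u : ℝ → ℝ := fun t => f' t * f' t + f'' t * f'' t with hu_def
  set u' : ℝ → ℝ := fun t => 2*(f' t * f'' t) + 2*(f'' t * f''' t) with hu'_def
  have huc : ContinuousOn u (Icc c d) := (hf'c.mul hf'c).add (hf''c.mul hf''c)
  have hu : ∀ t ∈ Icc c d, HasDerivWithinAt u (u' t) (Icc c d) t := by
    intro t ht
    have H1 := (hf' t (hsub ht)).mono hsub
    have H2 := (hf'' t (hsub ht)).mono hsub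
    have := (H1.mul H1).add (H2.mul H2)
    exact this.congr_deriv (by simp only [u']; ring)
  have hbound : ∀ t ∈ Icc c d, |u' t| ≤ K * u t := by
    intro t ht
    have hDt := hode t (hsub ht)
    have hAt : |f t| ≤ M := by simpa [Real.norm_eq_abs] using hM t ht
    have hBt : |f' t| ≤ M' := by simpa [Real.norm_eq_abs] using hM' t ht
    have := key_bound (m := m) (M := M) (M' := M')
      (A := f t) (B := f' t) (C := f'' t) (D := f''' t) (by linarith) hAt hBt
    simpa [hu'_def, hu_def, hK] using this
  have hua : u a = 0 := by simp [hu_def, h1, h2]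
  have hunn : ∀ t, 0 ≤ u t := fun t =>
    add_nonneg (mul_self_nonneg _) (mul_self_nonneg _)
  have hub : u b ≤ 0 := by
    rcases le_total a b with hab | hab
    · have hca : c = a := min_eq_left hab
      have hdb : d = b := max_eq_right hab
      have := gron_nonpos (g := u) (g' := u') (K := K) (a := c) (b := d)
        huc (fun t ht => hu t (Ico_subset_Icc_self ht))
        (by rw [hca]; exact hua.le)
        (fun t ht => (le_abs_self _).trans (hbound t (Ico_subset_Icc_self ht)))
      have := this d (right_mem_Icc.mpr (min_le_max))
      rwa [hdb] at this
    · have hcb : c = b := min_eq_right hab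
      have hda : d = a := max_eq_left hab
      have := gron_nonpos_rev (g := u) (g' := u') (K := K) (a := c) (b := d)
        huc (fun t ht => hu t (Ioc_subset_Icc_self ht))
        (by rw [hda]; exact hua.le)
        (fun t ht => (neg_le_abs _).trans (hbound t (Ioc_subset_Icc_self ht)))
      have := this c (left_mem_Icc.mpr (min_le_max))
      rwa [hcb] at this
  have hub0 : f' b * f' b + f'' b * f'' b = 0 := le_antisymm hub (hunn b)
  have hb2 : f' b * f' b = 0 :=
    le_antisymm (by nlinarith [mul_self_nonneg (f'' b)]) (mul_self_nonneg _)
  exact mul_self_eq_zero.mp hb2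
private lemma fpp_nonpos (m : ℝ) (hm : m < 0) (I : Set ℝ) (hI : I.OrdConnected)
    (f f' f'' f''' : ℝ → ℝ)
    (hf : ∀ t ∈ I, HasDerivWithinAt f (f' t) I t)
    (hf'' : ∀ t ∈ I, HasDerivWithinAt f'' (f''' t) I t)
    (hode : ∀ t ∈ I, f''' t + (m + 1) / 2 * f t * f'' t - m * (f' t) ^ 2 = 0)
    (t₀ : ℝ) (ht₀ : t₀ ∈ I) (h : f'' t₀ ≤ 0) :
    ∀ t ∈ I, t₀ ≤ t → f'' t ≤ 0 := by
  intro t₂ ht₂ hle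
  by_contra hpos
  push_neg at hpos
  have hsub : Icc t₀ t₂ ⊆ I := hI.out ht₀ ht₂
  have hfc : ContinuousOn f (Icc t₀ t₂) :=
    fun t ht => ((hf t (hsub ht)).continuousWithinAt).mono hsub
  have hf''c : ContinuousOn f'' (Icc t₀ t₂) :=
    fun t ht => ((hf'' t (hsub ht)).continuousWithinAt).mono hsub
  obtain ⟨M, hM⟩ := isCompact_Icc.exists_bound_of_continuousOn hfc
  set K := |m + 1| / 2 * M with hKdef
  have hKb : ∀ τ ∈ Icc t₀ t₂, -((m + 1) / 2 * f τ) ≤ K := by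
    intro τ hτ
    have h1 : |f τ| ≤ M := by simpa [Real.norm_eq_abs] using hM τ hτ
    calc -((m + 1) / 2 * f τ) ≤ |(m + 1) / 2 * f τ| := neg_le_abs _
      _ = |m + 1| / 2 * |f τ| := by rw [abs_mul, abs_div, abs_two]
      _ ≤ |m + 1| / 2 * M := by
          exact mul_le_mul_of_nonneg_left h1 (by positivity)
  set S := Icc t₀ t₂ ∩ f'' ⁻¹' Iic 0 with hSdef
  have hSclosed : IsClosed S := hf''c.preimage_isClosed_of_isClosed isClosed_Icc isClosed_Iic
  have hSne : S.Nonempty := ⟨t₀, ⟨left_mem_Icc.mpr hle, h⟩⟩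
  have hSbdd : BddAbove S := bddAbove_Icc.mono inter_subset_left
  set s := sSup S with hs
  have hsS : s ∈ S := hSclosed.csSup_mem hSne hSbdd
  have hsI : s ∈ Icc t₀ t₂ := hsS.1
  have hs0 : f'' s ≤ 0 := hsS.2
  have hst₂ : s < t₂ :=
    lt_of_le_of_ne hsI.2 (fun h' => absurd (h' ▸ hs0) (not_le.mpr hpos))
  have hgt : ∀ τ, s < τ → τ ≤ t₂ → 0 < f'' τ := by
    intro τ h1 h2
    by_contra hng
    push_neg at hng
    have hτS : τ ∈ S := ⟨⟨hsI.1.trans h1.le, h2⟩, hng⟩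
    exact absurd (le_csSup hSbdd hτS) (not_le.mpr h1)
  have hseq : f'' s = 0 := by
    refine le_antisymm hs0 ?_
    have hIoc : Ioc s t₂ ⊆ Icc t₀ t₂ := fun x hx => ⟨hsI.1.trans hx.1.le, hx.2⟩
    have hne : (𝓝[Ioc s t₂] s).NeBot := by
      refine mem_closure_iff_nhdsWithin_neBot.mp ?_
      rw [closure_Ioc hst₂.ne]
      exact left_mem_Icc.mpr hst₂.le
    have hcw : ContinuousWithinAt f'' (Ioc s t₂) s := (hf''c s hsI).mono hIoc
    exact ge_of_tendsto hcw (eventually_nhdsWithin_of_forall fun τ hτ => (hgt τ hτ.1 hτ.2).le)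
  have hsub2 : Icc s t₂ ⊆ Icc t₀ t₂ := Icc_subset_Icc hsI.1 le_rfl
  have hfinal := gron_nonpos (g := f'') (g' := f''') (K := K) (a := s) (b := t₂)
    (hf''c.mono hsub2)
    (fun τ hτ => (hf'' τ (hsub (hsub2 (Ico_subset_Icc_self hτ)))).mono
      (fun x hx => hsub (hsub2 hx)))
    hseq.le ?_
  · exact absurd (hfinal t₂ (right_mem_Icc.mpr hst₂.le)) (not_le.mpr hpos)
  · intro τ hτ
    have hτ' : τ ∈ Icc s t₂ := Ico_subset_Icc_self hτ
    have hD := hode τ (hsub (hsub2 hτ'))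
    have h0 : 0 ≤ f'' τ := by
      rcases eq_or_lt_of_le hτ.1 with he | hl
      · rw [← he]; exact hseq.ge
      · exact (hgt τ hl hτ'.2).le
    have hterm : -((m + 1) / 2 * f τ) * f'' τ ≤ K * f'' τ :=
      mul_le_mul_of_nonneg_right (hKb τ (hsub2 hτ')) h0
    have hsq : m * (f' τ) ^ 2 ≤ 0 := mul_nonpos_of_nonpos_of_nonneg hm.le (sq_nonneg _)
    nlinarith [hterm, hsq, hD]

theorem stmt2 (m : ℝ) (hm : m < 0) (I : Set ℝ) (hI : I.OrdConnected)
    (f f' f'' f''' : ℝ → ℝ)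
    (hf : ∀ t ∈ I, HasDerivWithinAt f (f' t) I t)
    (hf' : ∀ t ∈ I, HasDerivWithinAt f' (f'' t) I t)
    (hf'' : ∀ t ∈ I, HasDerivWithinAt f'' (f''' t) I t)
    (hode : ∀ t ∈ I,
      f''' t + (m + 1) / 2 * f t * f'' t - m * (f' t) ^ 2 = 0)
    (hnc : ¬ ∀ x ∈ I, ∀ y ∈ I, f x = f y)
    (t₀ : ℝ) (ht₀ : t₀ ∈ I) (h : f'' t₀ ≤ 0) :
    ∀ t ∈ I, t₀ < t → f'' t < 0 := by
  intro t ht htgt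
  have hB := fpp_nonpos m hm I hI f f' f'' f''' hf hf'' hode t₀ ht₀ h
  rcases lt_or_eq_of_le (hB t ht htgt.le) with hlt | heq
  · exact hlt
  exfalso
  have hsub : Icc t₀ t ⊆ I := hI.out ht₀ ht
  have hfc : ContinuousOn f (Icc t₀ t) :=
    fun τ hτ => ((hf τ (hsub hτ)).continuousWithinAt).mono hsub
  have hf''c : ContinuousOn f'' (Icc t₀ t) :=
    fun τ hτ => ((hf'' τ (hsub hτ)).continuousWithinAt).mono hsub
  obtain ⟨M, hM⟩ := isCompact_Icc.exists_bound_of_continuousOn hfc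
  set K := |m + 1| / 2 * M with hKdef
  have hKb : ∀ τ ∈ Icc t₀ t, (m + 1) / 2 * f τ ≤ K := by
    intro τ hτ
    have h1 : |f τ| ≤ M := by simpa [Real.norm_eq_abs] using hM τ hτ
    calc (m + 1) / 2 * f τ ≤ |(m + 1) / 2 * f τ| := le_abs_self _
      _ = |m + 1| / 2 * |f τ| := by rw [abs_mul, abs_div, abs_two]
      _ ≤ |m + 1| / 2 * M := mul_le_mul_of_nonneg_left h1 (by positivity)
  -- f'' vanishes identically on [t₀, t]
  have hzero : ∀ τ ∈ Icc t₀ t, f'' τ = 0 := by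
    have hrev := gron_nonpos_rev (g := fun τ => -(f'' τ)) (g' := fun τ => -(f''' τ))
      (K := K) (a := t₀) (b := t)
      (hf''c.neg)
      (fun τ hτ => ((hf'' τ (hsub (Ioc_subset_Icc_self hτ))).mono hsub).neg)
      (by simp [heq.symm]) ?_
    · intro τ hτ
      have h1 := hB τ (hsub hτ) hτ.1
      have h2 := hrev τ hτ
      simp only [neg_nonpos] at h2
      linarith
    · intro τ hτ
      have hτ' : τ ∈ Icc t₀ t := Ioc_subset_Icc_self hτ
      have hD := hode τ (hsub hτ')
      have h0 : f'' τ ≤ 0 := hB τ (hsub hτ') hτ.1.le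
      have hterm : ((m + 1) / 2 * f τ) * (-(f'' τ)) ≤ K * (-(f'' τ)) :=
        mul_le_mul_of_nonneg_right (hKb τ hτ') (by linarith)
      have hsq : m * (f' τ) ^ 2 ≤ 0 := mul_nonpos_of_nonpos_of_nonneg hm.le (sq_nonneg _)
      show -(-(f''' τ)) ≤ K * (-(f'' τ))
      nlinarith [hterm, hsq, hD]
  -- hence f''' vanishes on [t₀, t]
  have hud : UniqueDiffOn ℝ (Icc t₀ t) := uniqueDiffOn_Icc htgt
  have hzero3 : ∀ τ ∈ Icc t₀ t, f''' τ = 0 := by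
    intro τ hτ
    have hdw := (hf'' τ (hsub hτ)).mono hsub
    have hcongr : HasDerivWithinAt (fun _ => (0 : ℝ)) (f''' τ) (Icc t₀ t) τ :=
      hdw.congr (fun x hx => (hzero x hx).symm) (hzero τ hτ).symm
    have e1 := hcongr.derivWithin (hud τ hτ)
    rw [derivWithin_fun_const] at e1
    exact e1.symm
  -- hence f' vanishes on [t₀, t]
  have hzero1 : ∀ τ ∈ Icc t₀ t, f' τ = 0 := by
    intro τ hτ
    have hD := hode τ (hsub hτ)
    rw [hzero τ hτ, hzero3 τ hτ] at hD
    have : m * (f' τ) ^ 2 = 0 := by linarith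
    have := (mul_eq_zero.mp this).resolve_left (ne_of_lt hm)
    exact pow_eq_zero_iff two_ne_zero |>.mp this
  -- propagate: f' = 0 everywhere on I
  have ht₀Icc : t₀ ∈ Icc t₀ t := left_mem_Icc.mpr htgt.le
  have hall := zero_propagate m I hI f f' f'' f''' hf hf' hf'' hode t₀ ht₀
    (hzero1 t₀ ht₀Icc) (hzero t₀ ht₀Icc)
  apply hnc
  intro x hx y hy
  have hconv : Convex ℝ I := convex_iff_ordConnected.mpr hI
  have hbd := Convex.norm_image_sub_le_of_norm_hasDerivWithin_le (f := f) (f' := f') (C := 0)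
    (fun z hz => hf z hz) (fun z hz => by simp [hall z hz]) hconv hy hx
  have : f x - f y = 0 := by
    have : ‖f x - f y‖ ≤ 0 := by simpa using hbd
    simpa using this
  linarith [this]
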